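/- Let 0 < μ_2 < μ_3 and z_1, z_2, z_3 ∈ ℝ, and define φ(s) = z_1 + z_2 e^{−μ_2 s} + z_3 e^{−μ_3 s} for s ∈ ℝ_+. Then φ(s) ≥ 0 for all s ∈ ℝ_+ if and only if z_1 ≥ 0, z_1 + z_2 + z_3 ≥ 0, and one of the following conditions is satisfied: (i) z_2 ≥ 0; (ii) z_2 < 0 and z_3 ≤ 0; (iii) z_2 < 0, z_3 > 0 and μ_2 z_2 + μ_3 z_3 ≤ 0; (iv) z_2 < 0, z_3 > 0, μ_2 z_2 + μ_3 z_3 > 0 and z_1 + z_2 ((−μ_2 z_2)/(μ_3 z_3))^{μ_2/(μ_3−μ_2)} + z_3 ((−μ_2 z_2)/(μ_3 z_3))^{μ_3/(μ_3−μ_2)} ≥ 0. -/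

import Mathlib

open Real Set Filter

lemma hasDerivAt_phi (μ2 μ3 z1 z2 z3 s : ℝ) :
    HasDerivAt (fun s => z1 + z2 * Real.exp (-μ2 * s) + z3 * Real.exp (-μ3 * s))
      (z2 * (-μ2 * Real.exp (-μ2 * s)) + z3 * (-μ3 * Real.exp (-μ3 * s))) s := by
  have h2 : HasDerivAt (fun s : ℝ => Real.exp (-μ2 * s)) (-μ2 * Real.exp (-μ2 * s)) s := by
    simpa [mul_comm] using ((hasDerivAt_id s).const_mul (-μ2)).exp
  have h3 : HasDerivAt (fun s : ℝ => Real.exp (-μ3 * s)) (-μ3 * Real.exp (-μ3 * s)) s := by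
    simpa [mul_comm] using ((hasDerivAt_id s).const_mul (-μ3)).exp
  exact ((h2.const_mul z2).const_add z1).add (h3.const_mul z3)

lemma exp_sstar (μ2 μ3 c r : ℝ) (hr : 0 < r) :
    Real.exp (-c * (-Real.log r / (μ3 - μ2))) = r ^ (c / (μ3 - μ2)) := by
  rw [Real.rpow_def_of_pos hr]
  congr 1
  ring

-- s* is nonneg in case iv
lemma sstar_nonneg (μ2 μ3 z2 z3 : ℝ) (hμ2 : 0 < μ2) (hμ23 : μ2 < μ3)
    (hz2 : z2 < 0) (hz3 : 0 < z3) (hAB : 0 < μ2 * z2 + μ3 * z3) :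
    0 ≤ -Real.log ((-μ2 * z2) / (μ3 * z3)) / (μ3 - μ2) := by
  have hA : 0 < -μ2 * z2 := by nlinarith
  have hB : 0 < μ3 * z3 := by nlinarith
  have hr1 : (-μ2 * z2) / (μ3 * z3) ≤ 1 := by
    rw [div_le_one hB]; nlinarith
  have hlog : Real.log ((-μ2 * z2) / (μ3 * z3)) ≤ 0 :=
    Real.log_nonpos (by positivity) hr1
  have hd : 0 < μ3 - μ2 := by linarith
  exact div_nonneg (neg_nonneg.2 hlog) hd.le

-- φ(s*) is the minimum of φ on [0, ∞) in case iv
lemma case_iv_min (μ2 μ3 z1 z2 z3 : ℝ) (hμ2 : 0 < μ2) (hμ23 : μ2 < μ3)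
    (hz2 : z2 < 0) (hz3 : 0 < z3) (hAB : 0 < μ2 * z2 + μ3 * z3) (s : ℝ) (hs : 0 ≤ s) :
    z1 + z2 * Real.exp (-μ2 * (-Real.log ((-μ2 * z2) / (μ3 * z3)) / (μ3 - μ2)))
       + z3 * Real.exp (-μ3 * (-Real.log ((-μ2 * z2) / (μ3 * z3)) / (μ3 - μ2)))
      ≤ z1 + z2 * Real.exp (-μ2 * s) + z3 * Real.exp (-μ3 * s) := by
  set φ : ℝ → ℝ := fun s => z1 + z2 * Real.exp (-μ2 * s) + z3 * Real.exp (-μ3 * s) with hφ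
  have hA : 0 < -μ2 * z2 := by nlinarith
  have hB : 0 < μ3 * z3 := by nlinarith
  have hd : 0 < μ3 - μ2 := by linarith
  set r : ℝ := (-μ2 * z2) / (μ3 * z3) with hrdef
  set t : ℝ := -Real.log r / (μ3 - μ2) with htdef
  have hlogr : Real.log r = Real.log (-μ2 * z2) - Real.log (μ3 * z3) :=
    Real.log_div hA.ne' hB.ne'
  have ht0 : 0 ≤ t := sstar_nonneg μ2 μ3 z2 z3 hμ2 hμ23 hz2 hz3 hAB
  have hdiff : ∀ x : ℝ, DifferentiableAt ℝ φ x := fun x =>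
    (hasDerivAt_phi μ2 μ3 z1 z2 z3 x).differentiableAt
  have hcont : Continuous φ := by
    fun_prop
  -- derivative formula
  have hderiv : ∀ x : ℝ, deriv φ x
      = (-μ2 * z2 * Real.exp ((μ3 - μ2) * x) - μ3 * z3) * Real.exp (-μ3 * x) := by
    intro x
    rw [(hasDerivAt_phi μ2 μ3 z1 z2 z3 x).deriv]
    have he : Real.exp (-μ2 * x) = Real.exp ((μ3 - μ2) * x) * Real.exp (-μ3 * x) := by
      rw [← Real.exp_add]; ring_nf
    rw [he]; ring
  -- threshold inequalities
  have hlb : ∀ x : ℝ, t ≤ x → 0 ≤ deriv φ x := by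
    intro x hx
    rw [hderiv x]
    have h1 : Real.log (μ3 * z3) - Real.log (-μ2 * z2) ≤ (μ3 - μ2) * x := by
      have : -Real.log r ≤ (μ3 - μ2) * x := by
        rw [htdef] at hx
        calc -Real.log r = (-Real.log r / (μ3 - μ2)) * (μ3 - μ2) := by field_simp
          _ ≤ x * (μ3 - μ2) := by apply mul_le_mul_of_nonneg_right hx hd.le
          _ = (μ3 - μ2) * x := by ring
      rw [hlogr] at this; linarith
    have h2 : μ3 * z3 ≤ -μ2 * z2 * Real.exp ((μ3 - μ2) * x) := by
      have := Real.exp_le_exp.2 h1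
      rw [Real.exp_sub, Real.exp_log hA, Real.exp_log hB] at this
      rw [div_le_iff₀ hA] at this
      linarith
    have := Real.exp_pos (-μ3 * x)
    nlinarith
  have hub : ∀ x : ℝ, x ≤ t → deriv φ x ≤ 0 := by
    intro x hx
    rw [hderiv x]
    have h1 : (μ3 - μ2) * x ≤ Real.log (μ3 * z3) - Real.log (-μ2 * z2) := by
      have : (μ3 - μ2) * x ≤ -Real.log r := by
        rw [htdef] at hx
        calc (μ3 - μ2) * x = x * (μ3 - μ2) := by ring
          _ ≤ (-Real.log r / (μ3 - μ2)) * (μ3 - μ2) :=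
              mul_le_mul_of_nonneg_right hx hd.le
          _ = -Real.log r := by field_simp
      rw [hlogr] at this; linarith
    have h2 : -μ2 * z2 * Real.exp ((μ3 - μ2) * x) ≤ μ3 * z3 := by
      have := Real.exp_le_exp.2 h1
      rw [Real.exp_sub, Real.exp_log hA, Real.exp_log hB] at this
      rw [le_div_iff₀ hA] at this
      linarith
    have := Real.exp_pos (-μ3 * x)
    nlinarith
  -- monotonicity
  have hant : AntitoneOn φ (Icc 0 t) := by
    apply antitoneOn_of_deriv_nonpos (convex_Icc 0 t) hcont.continuousOn
      (fun x _ => (hdiff x).differentiableWithinAt)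
    intro x hx
    rw [interior_Icc] at hx
    exact hub x hx.2.le
  have hmono : MonotoneOn φ (Ici t) := by
    apply monotoneOn_of_deriv_nonneg (convex_Ici t) hcont.continuousOn
      (fun x _ => (hdiff x).differentiableWithinAt)
    intro x hx
    rw [interior_Ici] at hx
    exact hlb x hx.le
  rcases le_total s t with h | h
  · exact hant ⟨hs, h⟩ ⟨ht0, le_rfl⟩ h
  · exact hmono (mem_Ici.2 le_rfl) (mem_Ici.2 h) h

/-- Necessary and sufficient conditions for non-negativity on `ℝ₊` of
`φ(s) = z₁ + z₂ e^{-μ₂ s} + z₃ e^{-μ₃ s}` with `0 < μ₂ < μ₃` (case n = 3). -/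
theorem nonneg_three_term_exp_iff
    (μ2 μ3 z1 z2 z3 : ℝ) (hμ2 : 0 < μ2) (hμ23 : μ2 < μ3) :
    (∀ s : ℝ, 0 ≤ s → 0 ≤ z1 + z2 * Real.exp (-μ2 * s) + z3 * Real.exp (-μ3 * s)) ↔
      (0 ≤ z1 ∧ 0 ≤ z1 + z2 + z3 ∧
        (0 ≤ z2 ∨
          (z2 < 0 ∧ z3 ≤ 0) ∨
          (z2 < 0 ∧ 0 < z3 ∧ μ2 * z2 + μ3 * z3 ≤ 0) ∨
          (z2 < 0 ∧ 0 < z3 ∧ 0 < μ2 * z2 + μ3 * z3 ∧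
            0 ≤ z1 + z2 * ((-μ2 * z2) / (μ3 * z3)) ^ (μ2 / (μ3 - μ2))
                + z3 * ((-μ2 * z2) / (μ3 * z3)) ^ (μ3 / (μ3 - μ2))))) := by
  have hμ3 : 0 < μ3 := hμ2.trans hμ23
  constructor
  · -- forward
    intro h
    have h123 : 0 ≤ z1 + z2 + z3 := by simpa using h 0 le_rfl
    have h1 : 0 ≤ z1 := by
      have key : ∀ c : ℝ, 0 < c → Tendsto (fun s : ℝ => Real.exp (-c * s)) atTop (nhds 0) :=
        fun c hc => Real.tendsto_exp_atBot.comp (tendsto_id.const_mul_atTop_of_neg (by linarith))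
      have tphi : Tendsto (fun s : ℝ => z1 + z2 * Real.exp (-μ2 * s) + z3 * Real.exp (-μ3 * s))
          atTop (nhds (z1 + z2 * 0 + z3 * 0)) :=
        (tendsto_const_nhds.add ((key μ2 hμ2).const_mul z2)).add ((key μ3 hμ3).const_mul z3)
      have := ge_of_tendsto tphi (eventually_atTop.2 ⟨0, h⟩)
      linarith
    refine ⟨h1, h123, ?_⟩
    rcases le_or_gt 0 z2 with hz2 | hz2
    · exact Or.inl hz2
    rcases le_or_gt z3 0 with hz3 | hz3
    · exact Or.inr (Or.inl ⟨hz2, hz3⟩)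
    rcases le_or_gt (μ2 * z2 + μ3 * z3) 0 with hAB | hAB
    · exact Or.inr (Or.inr (Or.inl ⟨hz2, hz3, hAB⟩))
    refine Or.inr (Or.inr (Or.inr ⟨hz2, hz3, hAB, ?_⟩))
    set r : ℝ := (-μ2 * z2) / (μ3 * z3) with hrdef
    set t : ℝ := -Real.log r / (μ3 - μ2) with htdef
    have ht0 : 0 ≤ t := sstar_nonneg μ2 μ3 z2 z3 hμ2 hμ23 hz2 hz3 hAB
    have hr : 0 < r := by
      apply div_pos (by nlinarith) (by nlinarith)
    have := h t ht0
    rwa [show -μ2 * t = -μ2 * (-Real.log r / (μ3 - μ2)) from rfl,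
      exp_sstar μ2 μ3 μ2 r hr, exp_sstar μ2 μ3 μ3 r hr] at this
  · -- backward
    rintro ⟨h1, h123, hcase⟩ s hs
    have ha : 0 < Real.exp (-μ2 * s) := Real.exp_pos _
    have hb : 0 < Real.exp (-μ3 * s) := Real.exp_pos _
    have ha1 : Real.exp (-μ2 * s) ≤ 1 := Real.exp_le_one_iff.2 (by nlinarith)
    have hb1 : Real.exp (-μ3 * s) ≤ 1 := Real.exp_le_one_iff.2 (by nlinarith)
    have hba : Real.exp (-μ3 * s) ≤ Real.exp (-μ2 * s) := Real.exp_le_exp.2 (by nlinarith)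
    rcases hcase with hz2 | ⟨hz2, hz3⟩ | ⟨hz2, hz3, hAB⟩ | ⟨hz2, hz3, hAB, h4⟩
    · -- case (i)
      rcases le_or_gt 0 z3 with hz3 | hz3
      · nlinarith [mul_nonneg hz2 ha.le, mul_nonneg hz3 hb.le]
      · rcases le_or_gt 0 (z2 + z3) with h23 | h23
        · nlinarith [mul_nonneg h23 ha.le,
            mul_nonneg (sub_nonneg.2 hba) (neg_nonneg.2 hz3.le)]
        · nlinarith [mul_nonneg (sub_nonneg.2 ha1) (neg_nonneg.2 h23.le),
            mul_nonneg (sub_nonneg.2 hba) (neg_nonneg.2 hz3.le)]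
    · -- case (ii)
      nlinarith [mul_nonneg (sub_nonneg.2 ha1) (neg_nonneg.2 hz2.le),
        mul_nonneg (sub_nonneg.2 hb1) (neg_nonneg.2 hz3)]
    · -- case (iii): φ is increasing on [0, ∞), so φ(s) ≥ φ(0) = z1+z2+z3
      set φ : ℝ → ℝ := fun s => z1 + z2 * Real.exp (-μ2 * s) + z3 * Real.exp (-μ3 * s) with hφ
      have hcont : Continuous φ := by fun_prop
      have hmono : MonotoneOn φ (Ici (0:ℝ)) := by
        apply monotoneOn_of_deriv_nonneg (convex_Ici 0) hcont.continuousOn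
          (fun x _ => (hasDerivAt_phi μ2 μ3 z1 z2 z3 x).differentiableAt.differentiableWithinAt)
        intro x hx
        rw [interior_Ici] at hx
        rw [(hasDerivAt_phi μ2 μ3 z1 z2 z3 x).deriv]
        have hax : 0 < Real.exp (-μ2 * x) := Real.exp_pos _
        have hbax : Real.exp (-μ3 * x) ≤ Real.exp (-μ2 * x) :=
          Real.exp_le_exp.2 (by nlinarith [le_of_lt (mem_Ioi.mp hx)])
        nlinarith [mul_nonneg (by nlinarith : (0:ℝ) ≤ -(μ2 * z2) - μ3 * z3) hax.le,
          mul_nonneg (by positivity : (0:ℝ) ≤ μ3 * z3) (sub_nonneg.2 hbax)]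
      have := hmono (mem_Ici.2 le_rfl) (mem_Ici.2 hs) hs
      have h0 : φ 0 = z1 + z2 + z3 := by simp [hφ]
      rw [h0] at this
      calc (0:ℝ) ≤ z1 + z2 + z3 := h123
        _ ≤ φ s := this
    · -- case (iv)
      set r : ℝ := (-μ2 * z2) / (μ3 * z3) with hrdef
      have hr : 0 < r := div_pos (by nlinarith) (by nlinarith)
      have hmin := case_iv_min μ2 μ3 z1 z2 z3 hμ2 hμ23 hz2 hz3 hAB s hs
      rw [exp_sstar μ2 μ3 μ2 r hr, exp_sstar μ2 μ3 μ3 r hr] at hmin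
      linarith
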